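/- For every natural number m and all real numbers x and y, one has (x+m+1) · Σ_{n=0}^{m} (-1)^n · C(x+y+n, m-n) · C(y+2n, n) = Σ_{n=0}^{m} C(x+n, m-n) · (-4)^n + (x-m) · C(x,m). -/

import Mathlib

open Finset PowerSeries

/-- Generalized binomial coefficient `C(x, k) = x(x-1)⋯(x-k+1)/k!` for real `x`. -/
noncomputable def gchoose (x : ℝ) (k : ℕ) : ℝ :=
  (∏ i ∈ Finset.range k, (x - i)) / (Nat.factorial k)

/-- The binomial series `(1+t)^x = Σ C(x,k) t^k` as a formal power series. -/
noncomputable def binomSeries (x : ℝ) : PowerSeries ℝ :=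
  PowerSeries.mk fun k => gchoose x k

section Aux

open Polynomial

lemma gchoose_zero (x : ℝ) : gchoose x 0 = 1 := by simp [gchoose]

lemma gchoose_one (x : ℝ) : gchoose x 1 = x := by simp [gchoose]

lemma gchoose_abs (x : ℝ) (k : ℕ) :
    (k + 1 : ℝ) * gchoose x (k + 1) = (x - k) * gchoose x k := by
  have h : ((k+1).factorial : ℝ) = (k+1) * k.factorial := by
    rw [Nat.factorial_succ]; push_cast; ring
  rw [gchoose, gchoose, prod_range_succ, h]
  have h1 : (k.factorial : ℝ) ≠ 0 := by positivity
  field_simp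

lemma gchoose_step (x : ℝ) (k : ℕ) :
    (k + 1 : ℝ) * gchoose (x + 1) (k + 1) = (x + 1) * gchoose x k := by
  have h : ∏ i ∈ range (k+1), (x + 1 - i) = (x + 1) * ∏ i ∈ range k, (x - i) := by
    rw [prod_range_succ']
    simp only [Nat.cast_add, Nat.cast_one, Nat.cast_zero]
    rw [mul_comm]
    congr 1
    · norm_num
    · exact prod_congr rfl fun i _ => by ring
  have hf : ((k+1).factorial : ℝ) = (k+1) * k.factorial := by
    rw [Nat.factorial_succ]; push_cast; ring
  rw [gchoose, gchoose, h, hf]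
  have h1 : (k.factorial : ℝ) ≠ 0 := by positivity
  field_simp

lemma gchoose_up (x : ℝ) (k : ℕ) :
    (x + 1 - k) * gchoose (x + 1) k = (x + 1) * gchoose x k := by
  have h : (∏ i ∈ range k, (x + 1 - i)) * (x + 1 - k) = (x + 1) * ∏ i ∈ range k, (x - i) := by
    have := prod_range_succ (fun i => (x + 1 - i)) k
    have h2 : ∏ i ∈ range (k+1), (x + 1 - i) = (x + 1) * ∏ i ∈ range k, (x - i) := by
      rw [prod_range_succ']
      simp only [Nat.cast_zero]
      rw [mul_comm]
      congr 1
      · norm_num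
      · exact prod_congr rfl fun i _ => by push_cast; ring
    rw [← this, h2]
  rw [gchoose, gchoose]
  have h1 : (k.factorial : ℝ) ≠ 0 := by positivity
  field_simp
  nlinarith [h]

lemma gchoose_pascal (x : ℝ) (k : ℕ) :
    gchoose (x + 1) (k + 1) = gchoose x (k + 1) + gchoose x k := by
  have hk : (k + 1 : ℝ) ≠ 0 := by positivity
  have h1 := gchoose_step x k
  have h2 := gchoose_abs x k
  field_simp at h1 h2 ⊢
  nlinarith [h1, h2]

lemma gchoose_zero_left (k : ℕ) : gchoose 0 (k + 1) = 0 := by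
  rw [gchoose, prod_range_succ']
  simp

lemma gchoose_central (n : ℕ) :
    ((n : ℝ) + 1)^2 * gchoose (2*(n:ℝ)+2) (n+1) = (2*(n:ℝ)+2)*(2*(n:ℝ)+1) * gchoose (2*(n:ℝ)) n := by
  have hs := gchoose_step (2*(n:ℝ)+1) n
  have e : (2*(n:ℝ)+1+1) = 2*(n:ℝ)+2 := by ring
  rw [e] at hs
  have hu := gchoose_up (2*(n:ℝ)) n
  have e2 : (2*(n:ℝ)+1-n) = (n:ℝ)+1 := by ring
  rw [e2] at hu
  nlinarith [hs, hu]

lemma cert (n k : ℕ) :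
    ((n:ℝ)+k+1) * (gchoose n (k+1) + 2 * gchoose n k) * gchoose (2*(n:ℝ)) n
    = ((n:ℝ)-k+1) * gchoose (2*(n:ℝ)+2) (n+1) * gchoose ((n:ℝ)+1) k
      + ((n:ℝ)-k-1) * gchoose (2*(n:ℝ)) n * gchoose n (k+1) := by
  have hne : (((n:ℝ)+1)^2) ≠ 0 := by positivity
  apply mul_left_cancel₀ hne
  have hA := gchoose_abs (n:ℝ) k
  have hU := gchoose_up (n:ℝ) k
  have hC := gchoose_central n
  linear_combination (-(((n:ℝ)-k+1)) * gchoose ((n:ℝ)+1) k) * hC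
    + (2*((n:ℝ)+1)^2 * gchoose (2*(n:ℝ)) n) * hA
    - (2*((n:ℝ)+1)*(2*(n:ℝ)+1) * gchoose (2*(n:ℝ)) n) * hU

lemma anchor (m : ℕ) :
    ∑ n ∈ range (m+1), (-1:ℝ)^n * gchoose (n:ℝ) (m-n) * gchoose (2*(n:ℝ)) n = (-2:ℝ)^m := by
  induction m with
  | zero => simp [gchoose_zero]
  | succ m ih =>
    have hm1 : ((m:ℝ)+1) ≠ 0 := by positivity
    set t1 : ℕ → ℝ := fun n => (-1:ℝ)^n * gchoose (n:ℝ) (m+1-n) * gchoose (2*(n:ℝ)) n with ht1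
    set t0 : ℕ → ℝ := fun n => (-1:ℝ)^n * gchoose (n:ℝ) (m-n) * gchoose (2*(n:ℝ)) n with ht0
    set g : ℕ → ℝ := fun n =>
      (-1:ℝ)^(n+1) * (2*(n:ℝ) - m - 1) * gchoose (2*(n:ℝ)) n * gchoose (n:ℝ) (m+1-n) with hg
    have claim1 : ∀ n ∈ range (m+1),
        ((m:ℝ)+1) * (t1 n + 2 * t0 n) = g (n+1) - g n := by
      intro n hn
      have hnm : n ≤ m := Nat.lt_succ_iff.mp (mem_range.mp hn)
      obtain ⟨k, hk⟩ := Nat.exists_eq_add_of_le hnm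
      subst hk
      have e1 : n + k - n = k := by omega
      have e2 : n + k + 1 - n = k + 1 := by omega
      have e3 : n + k + 1 - (n + 1) = k := by omega
      simp only [ht1, ht0, hg, e1, e2, e3]
      push_cast
      have e4 : (2*((n:ℝ)+1)) = 2*(n:ℝ)+2 := by ring
      rw [e4]
      linear_combination ((-1:ℝ)^n) * cert n k
    have claim2 : ((m:ℝ)+1) * t1 (m+1) = -(g (m+1)) := by
      simp only [ht1, hg, Nat.sub_self, gchoose_zero]
      push_cast
      ring
    have hg0 : g 0 = 0 := by
      simp only [hg]
      push_cast
      simp [gchoose_zero_left m]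
    have key : ((m:ℝ)+1) * (∑ n ∈ range (m+2), t1 n + 2 * ∑ n ∈ range (m+1), t0 n) = 0 := by
      rw [sum_range_succ]
      have : ((m:ℝ)+1) * ((∑ n ∈ range (m+1), t1 n + t1 (m+1)) + 2 * ∑ n ∈ range (m+1), t0 n)
          = (∑ n ∈ range (m+1), ((m:ℝ)+1) * (t1 n + 2 * t0 n)) + ((m:ℝ)+1) * t1 (m+1) := by
        rw [← mul_sum, sum_add_distrib, ← mul_sum]
        ring
      rw [this, sum_congr rfl claim1, Finset.sum_range_sub g (m+1), hg0, claim2]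
      ring
    have hS : ∑ n ∈ range (m+2), t1 n = -2 * ∑ n ∈ range (m+1), t0 n := by
      rcases mul_eq_zero.mp key with h | h
      · exact absurd h hm1
      · linarith
    rw [hS, ih]
    ring

/-- The inner alternating double-binomial sum. -/
noncomputable def Lsum (m : ℕ) (x y : ℝ) : ℝ :=
  ∑ n ∈ range (m+1), (-1:ℝ)^n * gchoose (x + y + n) (m - n) * gchoose (y + 2*n) n

/-- The right-hand sum. -/
noncomputable def Tsum (m : ℕ) (x : ℝ) : ℝ :=
  ∑ n ∈ range (m+1), gchoose (x + n) (m - n) * (-4:ℝ)^n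

/-- The common value `r m x = C(x,m) - 2 r (m-1) x`. -/
noncomputable def rfun : ℕ → ℝ → ℝ
  | 0, _ => 1
  | m+1, x => gchoose x (m+1) - 2 * rfun m x

lemma lsum_pascal (m : ℕ) (x y : ℝ) :
    Lsum (m+1) (x+1) y = Lsum (m+1) x y + Lsum m x y := by
  unfold Lsum
  rw [sum_range_succ, sum_range_succ (fun n => (-1:ℝ)^n * gchoose (x + y + n) (m+1 - n) * gchoose (y + 2*n) n)]
  have h : ∀ n ∈ range (m+1),
      (-1:ℝ)^n * gchoose (x+1+y+n) (m+1-n) * gchoose (y+2*n) n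
      = (-1:ℝ)^n * gchoose (x+y+n) (m+1-n) * gchoose (y+2*n) n
        + (-1:ℝ)^n * gchoose (x+y+n) (m-n) * gchoose (y+2*n) n := by
    intro n hn
    have hnm : n ≤ m := Nat.lt_succ_iff.mp (mem_range.mp hn)
    have e : m + 1 - n = (m - n) + 1 := by omega
    have e2 : x+1+y+(n:ℝ) = (x+y+n)+1 := by ring
    rw [e, e2, gchoose_pascal]
    ring
  rw [sum_congr rfl h, sum_add_distrib]
  have e3 : m + 1 - (m+1) = 0 := by omega
  simp only [e3, gchoose_zero]
  ring

lemma lsum_shift (m : ℕ) (x y : ℝ) :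
    Lsum (m+1) x y = Lsum (m+1) (x+1) (y-1) - Lsum m x (y+1) := by
  unfold Lsum
  have hR : ∑ n ∈ range (m+1+1), (-1:ℝ)^n * gchoose (x+1+(y-1)+n) (m+1-n) * gchoose ((y-1)+2*n) n
      = ∑ n ∈ range (m+1+1), (-1:ℝ)^n * gchoose (x+y+n) (m+1-n) * gchoose ((y-1)+2*n) n :=
    sum_congr rfl fun n _ => by rw [show x+1+(y-1)+(n:ℝ) = x+y+n from by ring]
  rw [hR]
  rw [sum_range_succ' (fun n => (-1:ℝ)^n * gchoose (x+y+n) (m+1-n) * gchoose (y+2*n) n) (m+1),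
      sum_range_succ' (fun n => (-1:ℝ)^n * gchoose (x+y+n) (m+1-n) * gchoose ((y-1)+2*n) n) (m+1)]
  have hpt : ∀ j ∈ range (m+1),
      (-1:ℝ)^(j+1) * gchoose (x+y+(j+1:ℕ)) (m+1-(j+1)) * gchoose (y+2*(j+1:ℕ)) (j+1)
      = (-1:ℝ)^(j+1) * gchoose (x+y+(j+1:ℕ)) (m+1-(j+1)) * gchoose ((y-1)+2*(j+1:ℕ)) (j+1)
        - (-1:ℝ)^j * gchoose (x+(y+1)+j) (m-j) * gchoose ((y+1)+2*j) j := by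
    intro j hj
    have e1 : m + 1 - (j+1) = m - j := by omega
    have e2 : y + 2*((j:ℝ)+1) = (y+2*(j:ℝ)+1) + 1 := by ring
    push_cast
    rw [e2, gchoose_pascal (y+2*(j:ℝ)+1) j]
    rw [show (y:ℝ)-1+2*((j:ℝ)+1) = y+2*(j:ℝ)+1 from by ring,
        show (y:ℝ)+1+2*(j:ℝ) = y+2*(j:ℝ)+1 from by ring,
        show x+y+((j:ℝ)+1) = x+(y+1)+(j:ℝ) from by ring]
    ring
  rw [sum_congr rfl hpt, sum_sub_distrib]
  have e0 : (0:ℝ) = ((0:ℕ):ℝ) := by norm_num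
  simp only [Nat.cast_zero, mul_zero, add_zero, pow_zero, gchoose_zero]
  ring

lemma tsum_pascal (m : ℕ) (x : ℝ) :
    Tsum (m+1) (x+1) = Tsum (m+1) x + Tsum m x := by
  unfold Tsum
  rw [sum_range_succ, sum_range_succ (fun n => gchoose (x + n) (m+1 - n) * (-4:ℝ)^n)]
  have h : ∀ n ∈ range (m+1),
      gchoose (x+1+n) (m+1-n) * (-4:ℝ)^n
      = gchoose (x+n) (m+1-n) * (-4:ℝ)^n + gchoose (x+n) (m-n) * (-4:ℝ)^n := by
    intro n hn
    have hnm : n ≤ m := Nat.lt_succ_iff.mp (mem_range.mp hn)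
    have e : m + 1 - n = (m - n) + 1 := by omega
    have e2 : x+1+(n:ℝ) = (x+n)+1 := by ring
    rw [e, e2, gchoose_pascal]
    ring
  rw [sum_congr rfl h, sum_add_distrib]
  have e3 : m + 1 - (m+1) = 0 := by omega
  simp only [e3, gchoose_zero]
  ring

lemma tsum_shift (m : ℕ) (x : ℝ) :
    Tsum (m+1) x = gchoose x (m+1) - 4 * Tsum m (x+1) := by
  unfold Tsum
  rw [sum_range_succ' (fun n => gchoose (x + n) (m+1 - n) * (-4:ℝ)^n) (m+1)]
  have hpt : ∀ j ∈ range (m+1),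
      gchoose (x+(j+1:ℕ)) (m+1-(j+1)) * (-4:ℝ)^(j+1)
      = -4 * (gchoose ((x+1)+j) (m-j) * (-4:ℝ)^j) := by
    intro j hj
    have e1 : m + 1 - (j+1) = m - j := by omega
    push_cast
    rw [show x+((j:ℝ)+1) = x+1+(j:ℝ) from by ring]
    ring
  rw [sum_congr rfl hpt, ← mul_sum]
  simp only [Nat.cast_zero, add_zero, pow_zero, Nat.sub_zero, mul_one]
  ring

lemma rfun_succ (m : ℕ) (x : ℝ) : rfun (m+1) x = gchoose x (m+1) - 2 * rfun m x := rfl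

lemma rfun_pascal (m : ℕ) (x : ℝ) :
    rfun (m+1) (x+1) = rfun (m+1) x + rfun m x := by
  induction m generalizing x with
  | zero =>
    rw [rfun_succ, rfun_succ, gchoose_one, gchoose_one]
    have h0 : ∀ t : ℝ, rfun 0 t = 1 := fun t => rfl
    rw [h0, h0]
    ring
  | succ k ih =>
    rw [rfun_succ (k+1) (x+1), gchoose_pascal, ih x, rfun_succ (k+1) x, rfun_succ k x]
    ring

lemma rfun_zero_eval (m : ℕ) : rfun m 0 = (-2:ℝ)^m := by
  induction m with
  | zero => simp [rfun]
  | succ k ih => rw [rfun_succ, gchoose_zero_left, ih]; ring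

lemma poly_periodic_const {f : ℝ → ℝ} (p : Polynomial ℝ) (hp : ∀ t, p.eval t = f t)
    (hper : ∀ t, f (t + 1) = f t) (t : ℝ) : f t = f 0 := by
  have hnat : ∀ n : ℕ, f n = f 0 := by
    intro n
    induction n with
    | zero => norm_num
    | succ n ih => push_cast; rw [hper (n:ℝ), ih]
  have hq : p - Polynomial.C (f 0) = 0 := by
    apply Polynomial.eq_zero_of_infinite_isRoot
    apply Set.infinite_of_injective_forall_mem (f := fun n : ℕ => (n:ℝ))
    · exact fun a b h => Nat.cast_injective h
    · intro n
      simp only [Set.mem_setOf_eq, Polynomial.IsRoot, Polynomial.eval_sub, Polynomial.eval_C]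
      rw [hp, hnat n, sub_self]
  have h2 := congrArg (Polynomial.eval t) hq
  simp only [Polynomial.eval_sub, Polynomial.eval_C, Polynomial.eval_zero] at h2
  rw [hp] at h2
  linarith

lemma lsum_poly_y (m : ℕ) (x : ℝ) : ∃ p : Polynomial ℝ, ∀ y, p.eval y = Lsum m x y := by
  refine ⟨∑ n ∈ range (m+1),
    Polynomial.C ((-1:ℝ)^n * (((m-n).factorial : ℝ))⁻¹ * ((n.factorial : ℝ))⁻¹)
      * ((∏ i ∈ range (m-n), (Polynomial.X + Polynomial.C (x + n - i)))
        * ∏ i ∈ range n, (Polynomial.X + Polynomial.C (2*(n:ℝ) - i))), ?_⟩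
  intro y
  rw [Polynomial.eval_finset_sum]
  unfold Lsum
  refine sum_congr rfl fun n _ => ?_
  simp only [Polynomial.eval_mul, Polynomial.eval_C, Polynomial.eval_prod, Polynomial.eval_add,
    Polynomial.eval_X, gchoose]
  rw [show (∏ i ∈ range (m-n), (y + (x + (n:ℝ) - i))) = ∏ i ∈ range (m-n), (x + y + (n:ℝ) - i) from
      prod_congr rfl fun i _ => by ring,
    show (∏ i ∈ range n, (y + (2*(n:ℝ) - i))) = ∏ i ∈ range n, (y + 2*(n:ℝ) - i) from
      prod_congr rfl fun i _ => by ring]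
  field_simp

lemma lsum_poly_x (m : ℕ) (y : ℝ) : ∃ p : Polynomial ℝ, ∀ x, p.eval x = Lsum m x y := by
  refine ⟨∑ n ∈ range (m+1),
    Polynomial.C ((-1:ℝ)^n * gchoose (y + 2*n) n * (((m-n).factorial : ℝ))⁻¹)
      * ∏ i ∈ range (m-n), (Polynomial.X + Polynomial.C (y + n - i)), ?_⟩
  intro x
  rw [Polynomial.eval_finset_sum]
  unfold Lsum
  refine sum_congr rfl fun n _ => ?_
  simp only [Polynomial.eval_mul, Polynomial.eval_C, Polynomial.eval_prod, Polynomial.eval_add,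
    Polynomial.eval_X, gchoose]
  rw [show (∏ i ∈ range (m-n), (x + (y + (n:ℝ) - i))) = ∏ i ∈ range (m-n), (x + y + (n:ℝ) - i) from
      prod_congr rfl fun i _ => by ring]
  field_simp

lemma rfun_poly (m : ℕ) : ∃ p : Polynomial ℝ, ∀ x, p.eval x = rfun m x := by
  induction m with
  | zero => exact ⟨1, fun x => by simp [rfun]⟩
  | succ k ih =>
    obtain ⟨p, hp⟩ := ih
    refine ⟨Polynomial.C ((((k+1).factorial : ℝ))⁻¹) * ∏ i ∈ range (k+1), (Polynomial.X - Polynomial.C (i:ℝ)) - 2 * p,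
      fun x => ?_⟩
    simp only [Polynomial.eval_sub, Polynomial.eval_mul, Polynomial.eval_C, Polynomial.eval_prod,
      Polynomial.eval_X, Polynomial.eval_ofNat]
    rw [hp, rfun_succ, gchoose]
    field_simp

lemma lsum_eq_rfun (m : ℕ) (x y : ℝ) : Lsum m x y = rfun m x := by
  induction m generalizing x y with
  | zero => simp [Lsum, rfun, gchoose_zero]
  | succ m ih =>
    have hper : ∀ x y : ℝ, Lsum (m+1) x (y+1) = Lsum (m+1) x y := by
      intro x y
      have hA := lsum_shift m x (y+1)
      rw [show y+1-1 = y from by ring] at hA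
      rw [lsum_pascal m x y, ih x (y+1+1), ih x y] at hA
      linarith
    have hconst : ∀ x y : ℝ, Lsum (m+1) x y = Lsum (m+1) x 0 := by
      intro x y
      obtain ⟨p, hp⟩ := lsum_poly_y (m+1) x
      exact poly_periodic_const p hp (fun t => hper x t) y
    have hcper : ∀ x : ℝ, Lsum (m+1) (x+1) 0 - rfun (m+1) (x+1)
        = Lsum (m+1) x 0 - rfun (m+1) x := by
      intro x
      rw [lsum_pascal m x 0, rfun_pascal m x, ih x 0]
      ring
    have hcconst : Lsum (m+1) x 0 - rfun (m+1) x = Lsum (m+1) 0 0 - rfun (m+1) 0 := by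
      obtain ⟨p, hp⟩ := lsum_poly_x (m+1) 0
      obtain ⟨q, hq⟩ := rfun_poly (m+1)
      exact poly_periodic_const (f := fun t => Lsum (m+1) t 0 - rfun (m+1) t) (p - q)
        (fun t => by simp [Polynomial.eval_sub, hp, hq]) (fun t => hcper t) x
    have hanchor : Lsum (m+1) 0 0 = (-2:ℝ)^(m+1) := by
      rw [← anchor (m+1)]
      unfold Lsum
      refine sum_congr rfl fun n _ => ?_
      rw [show (0:ℝ)+0+(n:ℝ) = (n:ℝ) from by ring, show (0:ℝ)+2*(n:ℝ) = 2*(n:ℝ) from by ring]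
    rw [hconst x y]
    rw [hanchor, rfun_zero_eval (m+1)] at hcconst
    linarith

lemma tsum_eq (m : ℕ) (x : ℝ) :
    Tsum m x + (x - m) * gchoose x m = (x + m + 1) * rfun m x := by
  induction m using Nat.twoStepInduction generalizing x with
  | zero =>
    simp [Tsum, rfun, gchoose_zero]
    ring
  | one =>
    have h1 : Tsum 1 x = x - 4 := by
      unfold Tsum
      rw [sum_range_succ, sum_range_succ, sum_range_zero]
      norm_num [gchoose_zero, gchoose_one]
      ring
    rw [h1]
    simp only [rfun]
    push_cast
    linear_combination (-3:ℝ) * gchoose_one x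
  | more n ih1 ih2 =>
    have trec : Tsum (n+2) x = gchoose x (n+2) - 4 * Tsum (n+1) x - 4 * Tsum n x := by
      rw [tsum_shift (n+1) x, tsum_pascal n x]
      ring
    have h2 : rfun (n+2) x = gchoose x (n+2) - 2 * rfun (n+1) x := rfl
    have h3 : rfun (n+1) x = gchoose x (n+1) - 2 * rfun n x := rfl
    have hA2 := gchoose_abs x (n+1)
    have hA1 := gchoose_abs x n
    have hi1 := ih1 x
    have hi2 := ih2 x
    push_cast at hA2 hi1 hi2 ⊢
    linear_combination trec + (-4) * hi2 + (-4) * hi1 + (-(x+(n:ℝ)+3)) * h2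
      + (-2*x-2*(n:ℝ)-2) * h3 + (-2) * hA2 + (-4) * hA1

end Aux

theorem sun_curious_identity (m : ℕ) (x y : ℝ) :
    (x + m + 1) *
        ∑ n ∈ Finset.range (m + 1),
          (-1 : ℝ) ^ n * gchoose (x + y + n) (m - n) * gchoose (y + 2 * n) n =
      (∑ n ∈ Finset.range (m + 1), gchoose (x + n) (m - n) * (-4 : ℝ) ^ n) +
        (x - m) * gchoose x m := by
  have h1 : Lsum m x y = rfun m x := lsum_eq_rfun m x y
  have h2 := tsum_eq m x
  unfold Lsum at h1
  unfold Tsum at h2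
  rw [h1]
  exact h2.symm
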